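/- Let m ≥ 2 and n ≥ 1 be integers and let S_{m,n} = ∑_{(a,b)} lcp(a,b), the sum over all ordered pairs (a,b) of lists over Fin m of length at most n of the length of the longest common prefix of a and b. Then (m − 1)³ · S_{m,n} = m·(m^{2n+1} − (2n+1)·m^{n+1} + (2n+1)·m^n − 1). -/

import Mathlib

/-- The longest common prefix of two lists. -/
def lcp {α : Type*} [DecidableEq α] : List α → List α → List α
  | a :: as, b :: bs => if a = b then a :: lcp as bs else []
  | _, _ => []

lemma lcp_nil_left {α : Type*} [DecidableEq α] (b : List α) : lcp [] b = [] := by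
  cases b <;> rfl

lemma lcp_nil_right {α : Type*} [DecidableEq α] (a : List α) : lcp a [] = [] := by
  cases a <;> rfl

lemma lcp_cons {α : Type*} [DecidableEq α] (x y : α) (as bs : List α) :
    lcp (x :: as) (y :: bs) = if x = y then x :: lcp as bs else [] := rfl

def Ln (m : ℕ) : ℕ → Finset (List (Fin m))
  | 0 => {[]}
  | n+1 => insert []
      ((Finset.univ : Finset (Fin m)).biUnion fun x => (Ln m n).image (x :: ·))

lemma mem_Ln (m n : ℕ) (l : List (Fin m)) : l ∈ Ln m n ↔ l.length ≤ n := by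
  induction n generalizing l with
  | zero =>
    simp [Ln, List.length_eq_zero_iff, Nat.le_zero]
  | succ n ih =>
    cases l with
    | nil => simp [Ln]
    | cons x xs =>
      simp only [Ln, Finset.mem_insert, Finset.mem_biUnion, Finset.mem_image,
        Finset.mem_univ, true_and]
      constructor
      · rintro (h | ⟨y, a, ha, h⟩)
        · simp at h
        · simp only [List.length_cons, Nat.add_le_add_iff_right]
          rw [← (List.cons_eq_cons.mp h).2]
          exact (ih a).1 ha
      · intro h
        right
        exact ⟨x, xs, (ih xs).2 (by simpa using h), rfl⟩

def Sf (m : ℕ) : ℕ → ℕ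
  | 0 => 0
  | n+1 => m * ((∑ k ∈ Finset.range (n+1), m^k)^2 + Sf m n)

lemma disj_Ln (m n : ℕ) : Set.PairwiseDisjoint ↑(Finset.univ : Finset (Fin m))
    (fun x => (Ln m n).image (x :: ·)) := by
  intro x _ y _ hxy
  simp only [Finset.disjoint_left, Finset.mem_image]
  rintro l ⟨a, _, rfl⟩ ⟨b, _, h⟩
  exact hxy (by injection h.symm)

lemma card_Ln (m n : ℕ) : (Ln m n).card = ∑ k ∈ Finset.range (n+1), m^k := by
  induction n with
  | zero => simp [Ln]
  | succ n ih =>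
    have hnil : ([] : List (Fin m)) ∉
        (Finset.univ : Finset (Fin m)).biUnion fun x => (Ln m n).image (x :: ·) := by
      simp
    rw [Ln, Finset.card_insert_of_notMem hnil,
      Finset.card_biUnion (disj_Ln m n)]
    have : ∀ x : Fin m, ((Ln m n).image (x :: ·)).card = (Ln m n).card := fun x =>
      Finset.card_image_of_injective _ (fun a b h => by injection h)
    simp only [this, Finset.sum_const, Finset.card_univ, Fintype.card_fin, smul_eq_mul, ih]
    conv_rhs => rw [geom_sum_succ]

lemma sum_lcp (m n : ℕ) :
    ∑ a ∈ Ln m n, ∑ b ∈ Ln m n, (lcp a b).length = Sf m n := by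
  induction n with
  | zero => simp [Ln, Sf, lcp_nil_left]
  | succ n ih =>
    set T := (Finset.univ : Finset (Fin m)).biUnion fun x => (Ln m n).image (x :: ·) with hT
    have hnil : ([] : List (Fin m)) ∉ T := by simp [hT]
    have hinj : ∀ x : Fin m, Set.InjOn (x :: ·) (Ln m n) := by
      intro x a _ b _ h; injection h
    have key : ∑ a ∈ T, ∑ b ∈ T, (lcp a b).length
        = m * ((Ln m n).card ^ 2 + Sf m n) := by
      rw [hT, Finset.sum_biUnion (disj_Ln m n)]
      have step1 : ∀ x : Fin m,
          ∑ a ∈ (Ln m n).image (x :: ·), ∑ b ∈ T, (lcp a b).length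
            = (Ln m n).card ^ 2 + Sf m n := by
        intro x
        rw [Finset.sum_image (hinj x)]
        have step2 : ∀ a ∈ Ln m n,
            ∑ b ∈ T, (lcp (x :: a) b).length
              = ∑ b ∈ Ln m n, ((lcp a b).length + 1) := by
          intro a _
          rw [hT, Finset.sum_biUnion (disj_Ln m n)]
          have inner : ∀ y : Fin m,
              ∑ b ∈ (Ln m n).image (y :: ·), (lcp (x :: a) b).length
                = if x = y then ∑ b ∈ Ln m n, ((lcp a b).length + 1) else 0 := by
            intro y
            rw [Finset.sum_image (hinj y)]
            by_cases hxy : x = y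
            · simp [lcp_cons, hxy]
            · simp [lcp_cons, hxy]
          simp only [inner, Finset.sum_ite_eq, Finset.mem_univ, if_true]
        rw [Finset.sum_congr rfl step2]
        simp only [Finset.sum_add_distrib, ih, Finset.sum_const, smul_eq_mul, mul_one, sq]
        ring
      simp only [← hT, step1, Finset.sum_const, Finset.card_univ, Fintype.card_fin, smul_eq_mul]
    have hLsucc : Ln m (n+1) = insert [] T := rfl
    rw [hLsucc, Finset.sum_insert hnil]
    have h0 : ∑ b ∈ insert [] T, (lcp ([] : List (Fin m)) b).length = 0 := by
      simp [lcp_nil_left]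
    have h1 : ∀ a ∈ T, ∑ b ∈ insert [] T, (lcp a b).length
        = ∑ b ∈ T, (lcp a b).length := by
      intro a _
      rw [Finset.sum_insert hnil]
      simp [lcp_nil_right]
    rw [h0, Finset.sum_congr rfl h1, key, Sf, card_Ln]
    ring

lemma key_int (m : ℕ) : ∀ n : ℕ, ((m : ℤ) - 1) ^ 3 * (Sf m n : ℤ)
    = (m : ℤ) * ((m : ℤ) ^ (2 * n + 1) - (2 * (n : ℤ) + 1) * (m : ℤ) ^ (n + 1)
        + (2 * (n : ℤ) + 1) * (m : ℤ) ^ n - 1) := by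
  intro n
  induction n with
  | zero => simp [Sf]
  | succ n ih =>
    have hgeom : (∑ k ∈ Finset.range (n+1), (m : ℤ) ^ k) * ((m : ℤ) - 1)
        = (m : ℤ) ^ (n+1) - 1 := geom_sum_mul _ _
    have hSf : (Sf m (n+1) : ℤ)
        = (m : ℤ) * ((∑ k ∈ Finset.range (n+1), (m : ℤ)^k)^2 + (Sf m n : ℤ)) := by
      rw [Sf]; push_cast; ring
    rw [hSf]
    have expand : ((m : ℤ) - 1) ^ 3 * ((m : ℤ) * ((∑ k ∈ Finset.range (n+1), (m : ℤ)^k)^2 + (Sf m n : ℤ)))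
        = (m : ℤ) * (((m : ℤ) - 1) * ((∑ k ∈ Finset.range (n+1), (m : ℤ)^k) * ((m : ℤ) - 1))^2
            + ((m : ℤ) - 1) ^ 3 * (Sf m n : ℤ)) := by ring
    rw [expand, hgeom, ih]
    push_cast
    ring

/-- For integers `m ≥ 2`, `n ≥ 1`, the sum `S_{m,n}` over all ordered pairs `(a, b)` of lists
over `Fin m` of length at most `n` of the length of the longest common prefix of `a` and `b`
satisfies `(m − 1)³·S_{m,n} = m·(m^{2n+1} − (2n+1)·m^{n+1} + (2n+1)·mⁿ − 1)`. -/
theorem stmt_6 (m n : ℕ) (hm : 2 ≤ m) (hn : 1 ≤ n)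
    (L : Finset (List (Fin m))) (hL : ∀ l : List (Fin m), l ∈ L ↔ l.length ≤ n)
    (S : ℕ) (hS : S = ∑ a ∈ L, ∑ b ∈ L, (lcp a b).length) :
    ((m : ℤ) - 1) ^ 3 * (S : ℤ)
      = (m : ℤ) * ((m : ℤ) ^ (2 * n + 1) - (2 * (n : ℤ) + 1) * (m : ℤ) ^ (n + 1)
          + (2 * (n : ℤ) + 1) * (m : ℤ) ^ n - 1) := by
  have hLeq : L = Ln m n := by
    ext l; rw [hL, mem_Ln]
  have hSeq : S = Sf m n := by rw [hS, hLeq, sum_lcp]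
  rw [hSeq]
  exact key_int m n
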